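/- arXiv:1505.00602 — 4 statements merged into one kernel-verified Lean document; each statement's English description precedes it below -/
import Mathlib

section
/- For every y ≥ 1, the modular j-function satisfies j(iy) ≤ e^{2πy} + 1193. -/
open Real Complex

/-- The nome `q = e^{2πiτ}`. -/
noncomputable def nome (τ : ℂ) : ℂ := Complex.exp (2 * Real.pi * Complex.I * τ)

/-- The modular discriminant `Δ(τ) = (2π)^{12} q ∏_{n≥1} (1-q^n)^{24}`. -/
noncomputable def modularDelta (τ : ℂ) : ℂ :=
  (2 * Real.pi) ^ 12 * nome τ * ∏' n : ℕ, (1 - nome τ ^ (n + 1)) ^ 24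

/-- The normalized Eisenstein series `E₄(τ) = 1 + 240 ∑_{n≥1} σ₃(n) q^n`. -/
noncomputable def eisensteinE4 (τ : ℂ) : ℂ :=
  1 + 240 * ∑' n : ℕ, (ArithmeticFunction.sigma 3 (n + 1) : ℂ) * nome τ ^ (n + 1)

/-- The modular `j`-function, with Fourier expansion `j(τ) = 1/q + 744 + ⋯`. -/
noncomputable def modularJ (τ : ℂ) : ℂ :=
  (2 * Real.pi) ^ 12 * eisensteinE4 τ ^ 3 / modularDelta τ

private lemma sigma3_le_pow4 (m : ℕ) : (ArithmeticFunction.sigma 3 m : ℝ) ≤ (m : ℝ) ^ 4 := by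
  rcases Nat.eq_zero_or_pos m with h | h
  · subst h; simp
  have hnat : ArithmeticFunction.sigma 3 m ≤ m ^ 4 := by
    rw [ArithmeticFunction.sigma_apply]
    have hsub : m.divisors ⊆ Finset.Icc 1 m := by
      intro d hd
      rw [Nat.mem_divisors] at hd
      rw [Finset.mem_Icc]
      refine ⟨Nat.one_le_iff_ne_zero.2 ?_, Nat.le_of_dvd h hd.1⟩
      rintro rfl
      exact hd.2 (Nat.eq_zero_of_zero_dvd hd.1)
    calc ∑ d ∈ m.divisors, d ^ 3 ≤ ∑ _d ∈ m.divisors, m ^ 3 := by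
          refine Finset.sum_le_sum fun d hd => ?_
          have hdm := hsub hd
          rw [Finset.mem_Icc] at hdm
          exact Nat.pow_le_pow_left hdm.2 3
      _ = m.divisors.card * m ^ 3 := by rw [Finset.sum_const, smul_eq_mul]
      _ ≤ m * m ^ 3 := by
          have hc : m.divisors.card ≤ m := by
            have := Finset.card_le_card hsub
            simpa using this
          exact Nat.mul_le_mul_right _ hc
      _ = m ^ 4 := by ring
  exact_mod_cast hnat

private lemma pow4_le_geom (n : ℕ) : ((n : ℝ) + 4) ^ 4 ≤ 256 * 4 ^ n := by
  induction n with
  | zero => norm_num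
  | succ k ih =>
    have hk : (0 : ℝ) ≤ (k : ℝ) := Nat.cast_nonneg k
    have h4 : (4 : ℝ) ^ (k + 1) = 4 * 4 ^ k := by ring
    push_cast
    push_cast at ih
    rw [h4]
    nlinarith [hk, sq_nonneg (k : ℝ), pow_nonneg hk 3, pow_nonneg hk 4, ih]

set_option maxHeartbeats 1000000 in
private lemma exp_two_pi_lb : (535.45 : ℝ) ≤ Real.exp (2 * Real.pi) := by
  have h1 : (6.283184 : ℝ) ≤ 2 * Real.pi := by
    have := Real.pi_gt_d6; linarith
  have h2 := Real.sum_le_exp_of_nonneg (by norm_num : (0:ℝ) ≤ 6.283184) 25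
  have h3 : (535.45 : ℝ) ≤ ∑ i ∈ Finset.range 25, (6.283184 : ℝ) ^ i / (Nat.factorial i : ℝ) := by
    simp [Finset.sum_range_succ]
    norm_num [Nat.factorial]
  calc (535.45 : ℝ) ≤ _ := h3
    _ ≤ Real.exp 6.283184 := h2
    _ ≤ Real.exp (2 * Real.pi) := Real.exp_le_exp.2 h1

set_option maxHeartbeats 1000000 in
private lemma poly_cert {t : ℝ} (ht0 : 0 < t) (hts : t ≤ 0.0018678) :
    (1 + 240 * (t + 9 * t ^ 2 + 28 * t ^ 3 + 258 * t ^ 4)) ^ 3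
      ≤ (1 + 1193 * t) * ((1 - 24 * t + 276 * t ^ 2 - 2024 * t ^ 3) *
        ((1 - 24 * t ^ 2) * (1 - 25 * t ^ 3))) := by
  have hs : ∀ k : ℕ, t ^ (k + 2) ≤ (0.0018678 : ℝ) ^ (k + 1) * t := by
    intro k
    calc t ^ (k + 2) = t ^ (k + 1) * t := by ring
      _ ≤ (0.0018678 : ℝ) ^ (k + 1) * t :=
        mul_le_mul_of_nonneg_right (pow_le_pow_left₀ ht0.le hts (k + 1)) ht0.le
  have e2 := hs 0
  have e3 := hs 1
  have e4 := hs 2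
  have e5 := hs 3
  have e6 := hs 4
  have e7 := hs 5
  have e8 := hs 6
  have e9 := hs 7
  have e10 := hs 8
  have e11 := hs 9
  have e12 := hs 10
  norm_num only at e2 e3 e4 e5 e6 e7 e8 e9 e10 e11 e12
  nlinarith [e2, e3, e4, e5, e6, e7, e8, e9, e10, e11, e12, ht0.le]

set_option maxHeartbeats 1000000 in
private lemma pow24_lb {t : ℝ} (ht0 : 0 < t) (hts : t ≤ 0.0018678) :
    (1 - 24 * t + 276 * t ^ 2 - 2024 * t ^ 3) ≤ (1 - t) ^ 24 := by
  have h6 : (1 - 6 * t + 15 * t ^ 2 - 20 * t ^ 3) ≤ (1 - t) ^ 6 := by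
    nlinarith [pow_nonneg ht0.le 4, sq_nonneg (t - 3), pow_nonneg ht0.le 2]
  have h6x : (0 : ℝ) ≤ 1 - 6 * t + 15 * t ^ 2 - 20 * t ^ 3 := by nlinarith
  have h12 : (1 - 12 * t + 66 * t ^ 2 - 220 * t ^ 3) ≤ (1 - t) ^ 12 := by
    have hsq : (1 - 6 * t + 15 * t ^ 2 - 20 * t ^ 3) ^ 2 ≤ ((1 - t) ^ 6) ^ 2 :=
      pow_le_pow_left₀ h6x h6 2
    have hkey : 1 - 12 * t + 66 * t ^ 2 - 220 * t ^ 3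
        ≤ (1 - 6 * t + 15 * t ^ 2 - 20 * t ^ 3) ^ 2 := by
      nlinarith [pow_nonneg ht0.le 4, pow_nonneg ht0.le 5, pow_nonneg ht0.le 6, sq_nonneg t]
    calc 1 - 12 * t + 66 * t ^ 2 - 220 * t ^ 3
        ≤ (1 - 6 * t + 15 * t ^ 2 - 20 * t ^ 3) ^ 2 := hkey
      _ ≤ ((1 - t) ^ 6) ^ 2 := hsq
      _ = (1 - t) ^ 12 := by ring
  have h12x : (0 : ℝ) ≤ 1 - 12 * t + 66 * t ^ 2 - 220 * t ^ 3 := by nlinarith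
  have hsq : (1 - 12 * t + 66 * t ^ 2 - 220 * t ^ 3) ^ 2 ≤ ((1 - t) ^ 12) ^ 2 :=
    pow_le_pow_left₀ h12x h12 2
  have hkey : 1 - 24 * t + 276 * t ^ 2 - 2024 * t ^ 3
      ≤ (1 - 12 * t + 66 * t ^ 2 - 220 * t ^ 3) ^ 2 := by
    nlinarith [pow_nonneg ht0.le 4, pow_nonneg ht0.le 5, pow_nonneg ht0.le 6, sq_nonneg t]
  calc 1 - 24 * t + 276 * t ^ 2 - 2024 * t ^ 3
      ≤ (1 - 12 * t + 66 * t ^ 2 - 220 * t ^ 3) ^ 2 := hkey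
    _ ≤ ((1 - t) ^ 12) ^ 2 := hsq
    _ = (1 - t) ^ 24 := by ring

set_option maxHeartbeats 1000000 in
/-- For `y ≥ 1` we have `j(iy) ≤ e^{2πy} + 1193` (note `j(iy)` is real). -/
theorem modularJ_le {y : ℝ} (hy : 1 ≤ y) :
    (modularJ (Complex.I * y)).re ≤ Real.exp (2 * Real.pi * y) + 1193 := by
  set t := Real.exp (-(2 * Real.pi * y)) with htdef
  have ht0 : 0 < t := Real.exp_pos _
  -- numeric bound on t
  have hexp2pi : (535.45 : ℝ) ≤ Real.exp (2 * π) := exp_two_pi_lb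
  have hts : t ≤ 0.0018678 := by
    have h1 : t ≤ Real.exp (-(2 * π)) := by
      rw [htdef]
      apply Real.exp_le_exp.2
      nlinarith [Real.pi_pos]
    have h2 : Real.exp (-(2 * π)) = (Real.exp (2 * π))⁻¹ := Real.exp_neg _
    have h3 : (Real.exp (2 * π))⁻¹ ≤ (535.45 : ℝ)⁻¹ := by
      apply inv_anti₀ (by norm_num) hexp2pi
    calc t ≤ Real.exp (-(2 * π)) := h1
      _ = (Real.exp (2 * π))⁻¹ := h2
      _ ≤ (535.45 : ℝ)⁻¹ := h3
      _ ≤ 0.0018678 := by norm_num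
  have ht1 : t < 1 := lt_of_le_of_lt hts (by norm_num)
  have htpow_le : ∀ n : ℕ, t ^ (n + 1) ≤ t := by
    intro n
    calc t ^ (n + 1) ≤ t ^ 1 := pow_le_pow_of_le_one ht0.le ht1.le (by omega)
      _ = t := pow_one t
  have hfac_pos : ∀ n : ℕ, 0 < 1 - t ^ (n + 1) := by
    intro n
    nlinarith [htpow_le n]
  -- nome value
  have hnome : nome (Complex.I * (y : ℂ)) = ((t : ℝ) : ℂ) := by
    rw [nome, htdef, Complex.ofReal_exp]
    congr 1
    push_cast
    linear_combination (2 * (Real.pi : ℂ) * (y : ℂ)) * Complex.I_mul_I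
  -- summability
  have hgeom4 : Summable (fun n : ℕ => (n : ℝ) ^ 4 * t ^ n) :=
    summable_pow_mul_geometric_of_norm_lt_one 4
      (by rwa [Real.norm_eq_abs, abs_of_pos ht0])
  have hshift : Summable (fun n : ℕ => ((n + 1 : ℕ) : ℝ) ^ 4 * t ^ (n + 1)) :=
    (summable_nat_add_iff 1).2 hgeom4
  have hσsum : Summable (fun n : ℕ => (ArithmeticFunction.sigma 3 (n + 1) : ℝ) * t ^ (n + 1)) := by
    apply Summable.of_nonneg_of_le (fun n => by positivity) (fun n => ?_) hshift
    exact mul_le_mul_of_nonneg_right (sigma3_le_pow4 (n + 1)) (by positivity)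
  set S := ∑' n : ℕ, (ArithmeticFunction.sigma 3 (n + 1) : ℝ) * t ^ (n + 1) with hSdef
  have hS0 : 0 ≤ S := tsum_nonneg fun n => by positivity
  -- bound on S
  have hrange3 : (∑ i ∈ Finset.range 3, (ArithmeticFunction.sigma 3 (i + 1) : ℝ) * t ^ (i + 1))
      = t + 9 * t ^ 2 + 28 * t ^ 3 := by
    rw [Finset.sum_range_succ, Finset.sum_range_succ, Finset.sum_range_succ,
      Finset.sum_range_zero]
    norm_num [show ArithmeticFunction.sigma 3 1 = 1 from by decide,
      show ArithmeticFunction.sigma 3 2 = 9 from by decide,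
      show ArithmeticFunction.sigma 3 3 = 28 from by decide]
  have h4t : 4 * t < 1 := by nlinarith
  have hgeo48 : Summable (fun n : ℕ => 256 * t ^ 4 * (4 * t) ^ n) :=
    (summable_geometric_of_lt_one (by positivity) h4t).mul_left _
  have htail_le : (∑' n : ℕ, (ArithmeticFunction.sigma 3 (n + 3 + 1) : ℝ) * t ^ (n + 3 + 1))
      ≤ 256 * t ^ 4 / (1 - 4 * t) := by
    have h1 : ∀ n : ℕ, (ArithmeticFunction.sigma 3 (n + 3 + 1) : ℝ) * t ^ (n + 3 + 1)
        ≤ 256 * t ^ 4 * (4 * t) ^ n := by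
      intro n
      have hσ := sigma3_le_pow4 (n + 3 + 1)
      have h2 := pow4_le_geom n
      have hc : ((n + 3 + 1 : ℕ) : ℝ) = (n : ℝ) + 4 := by push_cast; ring
      rw [hc] at hσ
      calc (ArithmeticFunction.sigma 3 (n + 3 + 1) : ℝ) * t ^ (n + 3 + 1)
          ≤ ((n : ℝ) + 4) ^ 4 * t ^ (n + 3 + 1) :=
            mul_le_mul_of_nonneg_right hσ (by positivity)
        _ ≤ (256 * 4 ^ n) * t ^ (n + 3 + 1) :=
            mul_le_mul_of_nonneg_right h2 (by positivity)
        _ = 256 * t ^ 4 * (4 * t) ^ n := by rw [mul_pow]; ring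
    have h2 := Summable.tsum_le_tsum h1 ((summable_nat_add_iff 3).2 hσsum) hgeo48
    have h3 : (∑' n : ℕ, 256 * t ^ 4 * (4 * t) ^ n) = 256 * t ^ 4 / (1 - 4 * t) := by
      rw [tsum_mul_left, tsum_geometric_of_lt_one (by positivity) h4t, div_eq_mul_inv]
    linarith [h2, le_of_eq h3]
  have hS_le : S ≤ t + 9 * t ^ 2 + 28 * t ^ 3 + 258 * t ^ 4 := by
    have hsplit : (∑ i ∈ Finset.range 3, (ArithmeticFunction.sigma 3 (i + 1) : ℝ) * t ^ (i + 1))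
        + (∑' n : ℕ, (ArithmeticFunction.sigma 3 (n + 3 + 1) : ℝ) * t ^ (n + 3 + 1))
        = ∑' n : ℕ, (ArithmeticFunction.sigma 3 (n + 1) : ℝ) * t ^ (n + 1) :=
      Summable.sum_add_tsum_nat_add (f := fun n : ℕ =>
        (ArithmeticFunction.sigma 3 (n + 1) : ℝ) * t ^ (n + 1)) 3 hσsum
    have hdiv : 256 * t ^ 4 / (1 - 4 * t) ≤ 258 * t ^ 4 := by
      rw [div_le_iff₀ (by nlinarith : (0:ℝ) < 1 - 4 * t)]
      nlinarith [pow_nonneg ht0.le 4, pow_nonneg ht0.le 5]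
    rw [hSdef, ← hsplit, hrange3]
    linarith [htail_le, hdiv]
  -- multipliability of the product
  have hmul : Multipliable (fun n : ℕ => (1 - t ^ (n + 1)) ^ 24) := by
    apply Real.multipliable_of_summable_log (fun n => pow_pos (hfac_pos n) 24) ?_
    apply Summable.of_norm_bounded (g := fun n : ℕ => 48 * (t * t ^ n))
      (((summable_geometric_of_lt_one ht0.le ht1).mul_left t).mul_left 48)
    intro n
    rw [Real.norm_eq_abs, Real.log_pow]
    have hx0 : 0 ≤ t ^ (n + 1) := by positivity
    have hx : t ^ (n + 1) ≤ 1 / 2 := le_trans (htpow_le n) (by linarith [hts])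
    have hfp := hfac_pos n
    have hlog1 := Real.log_le_sub_one_of_pos (inv_pos.2 hfp)
    rw [Real.log_inv] at hlog1
    have hinv : (1 - t ^ (n + 1))⁻¹ * (1 - t ^ (n + 1)) = 1 := inv_mul_cancel₀ (ne_of_gt hfp)
    have hinv2 : (1 - t ^ (n + 1))⁻¹ ≤ 1 + 2 * t ^ (n + 1) := by nlinarith [hinv]
    have hlog_le : -Real.log (1 - t ^ (n + 1)) ≤ 2 * t ^ (n + 1) := by linarith
    have hlog_neg : Real.log (1 - t ^ (n + 1)) ≤ 0 :=
      Real.log_nonpos (by linarith) (by nlinarith)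
    rw [abs_of_nonpos (by nlinarith : ((24 : ℕ) : ℝ) * Real.log (1 - t ^ (n + 1)) ≤ 0)]
    have he : t * t ^ n = t ^ (n + 1) := by ring
    rw [he]
    push_cast
    nlinarith [hlog_le]
  set P := ∏' n : ℕ, (1 - t ^ (n + 1)) ^ 24 with hPdef
  -- partial product lower bound
  have hprod_nonneg : ∀ N : ℕ, 0 ≤ ∏ i ∈ Finset.range N, (1 - t ^ (i + 1)) ^ 24 :=
    fun N => Finset.prod_nonneg fun i _ => by positivity
  have hgeo24 : ∀ M : ℕ, 24 * (∑ i ∈ Finset.range M, t ^ (i + 3)) ≤ 25 * t ^ 3 := by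
    intro M
    have h1 : (∑ i ∈ Finset.range M, t ^ (i + 3)) = t ^ 3 * ∑ i ∈ Finset.range M, t ^ i := by
      rw [Finset.mul_sum]
      exact Finset.sum_congr rfl fun i _ => by ring
    have h2 : (∑ i ∈ Finset.range M, t ^ i) ≤ (1 - t)⁻¹ := by
      have hle := Summable.sum_le_tsum (Finset.range M)
        (fun i _ => by positivity : ∀ i ∉ Finset.range M, (0:ℝ) ≤ t ^ i)
        (summable_geometric_of_lt_one ht0.le ht1)
      rwa [tsum_geometric_of_lt_one ht0.le ht1] at hle
    have h3 : (1 - t)⁻¹ ≤ 25 / 24 := by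
      have h4 := inv_anti₀ (show (0:ℝ) < 24/25 by norm_num)
        (by linarith : (24/25 : ℝ) ≤ 1 - t)
      calc (1 - t)⁻¹ ≤ ((24:ℝ)/25)⁻¹ := h4
        _ = 25 / 24 := by norm_num
    rw [h1]
    have h4 : t ^ 3 * (∑ i ∈ Finset.range M, t ^ i) ≤ t ^ 3 * (25 / 24) := by
      apply mul_le_mul_of_nonneg_left (le_trans h2 h3) (by positivity)
    nlinarith [h4]
  have hgeoS : ∀ M : ℕ, 0 ≤ ∑ i ∈ Finset.range M, t ^ (i + 3) :=
    fun M => Finset.sum_nonneg fun i _ => by positivity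
  have hclaim : ∀ M : ℕ, (1 - t) ^ 24 * ((1 - t ^ 2) ^ 24 *
      (1 - 24 * (∑ i ∈ Finset.range M, t ^ (i + 3))))
      ≤ ∏ i ∈ Finset.range (2 + M), (1 - t ^ (i + 1)) ^ 24 := by
    intro M
    induction M with
    | zero =>
      rw [Finset.sum_range_zero, Finset.prod_range_succ, Finset.prod_range_succ,
        Finset.prod_range_zero]
      apply le_of_eq
      norm_num
    | succ M ih =>
      rw [show 2 + (M + 1) = (2 + M) + 1 by ring, Finset.prod_range_succ,
        Finset.sum_range_succ]
      have hSM0 := hgeoS M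
      have hSM1 := hgeo24 M
      have ha0 : 0 ≤ t ^ (M + 3) := by positivity
      have ha1 : t ^ (M + 3) ≤ t := by
        rw [show M + 3 = M + 2 + 1 by omega]
        exact htpow_le (M + 2)
      have hbx : (0 : ℝ) ≤ 1 - 24 * t ^ (M + 3) := by linarith only [ha1, hts]
      have hexpand : (1 - 24 * (∑ i ∈ Finset.range M, t ^ (i + 3))) * (1 - 24 * t ^ (M + 3))
          = 1 - 24 * (∑ i ∈ Finset.range M, t ^ (i + 3)) - 24 * t ^ (M + 3)
            + 576 * ((∑ i ∈ Finset.range M, t ^ (i + 3)) * t ^ (M + 3)) := by ring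
      have key : 1 - 24 * ((∑ i ∈ Finset.range M, t ^ (i + 3)) + t ^ (M + 3))
          ≤ (1 - 24 * (∑ i ∈ Finset.range M, t ^ (i + 3))) * (1 - 24 * t ^ (M + 3)) := by
        linarith only [hexpand, mul_nonneg hSM0 ha0]
      have hb : 1 - 24 * t ^ (M + 3) ≤ (1 - t ^ (M + 3)) ^ 24 := by
        have h := one_add_mul_le_pow (show (-2 : ℝ) ≤ -t ^ (M + 3) by linarith only [ha0, ha1, hts]) 24
        rw [show (1 : ℝ) - 24 * t ^ (M + 3) = 1 + (24 : ℕ) * (-t ^ (M + 3)) by push_cast; ring,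
          show (1 : ℝ) - t ^ (M + 3) = 1 + -t ^ (M + 3) by ring]
        exact h
      calc (1 - t) ^ 24 * ((1 - t ^ 2) ^ 24 *
            (1 - 24 * ((∑ i ∈ Finset.range M, t ^ (i + 3)) + t ^ (M + 3))))
          ≤ (1 - t) ^ 24 * ((1 - t ^ 2) ^ 24 *
            ((1 - 24 * (∑ i ∈ Finset.range M, t ^ (i + 3))) * (1 - 24 * t ^ (M + 3)))) := by
            apply mul_le_mul_of_nonneg_left _ (by positivity)
            apply mul_le_mul_of_nonneg_left key (by positivity)
        _ = ((1 - t) ^ 24 * ((1 - t ^ 2) ^ 24 *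
            (1 - 24 * (∑ i ∈ Finset.range M, t ^ (i + 3))))) * (1 - 24 * t ^ (M + 3)) := by
            ring
        _ ≤ (∏ i ∈ Finset.range (2 + M), (1 - t ^ (i + 1)) ^ 24) * (1 - t ^ (M + 3)) ^ 24 :=
            mul_le_mul ih hb hbx (hprod_nonneg _)
        _ = (∏ i ∈ Finset.range (2 + M), (1 - t ^ (i + 1)) ^ 24) * (1 - t ^ (2 + M + 1)) ^ 24 := by
            rw [show 2 + M + 1 = M + 3 by ring]
  have hPl : (1 - t) ^ 24 * ((1 - t ^ 2) ^ 24 * (1 - 25 * t ^ 3)) ≤ P := by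
    apply ge_of_tendsto hmul.hasProd.tendsto_prod_nat
    filter_upwards [Filter.eventually_ge_atTop 2] with N hN
    obtain ⟨M, rfl⟩ : ∃ M, N = 2 + M := ⟨N - 2, by omega⟩
    refine le_trans ?_ (hclaim M)
    have h1 : 1 - 25 * t ^ 3 ≤ 1 - 24 * (∑ i ∈ Finset.range M, t ^ (i + 3)) := by
      linarith [hgeo24 M]
    apply mul_le_mul_of_nonneg_left _ (by positivity)
    apply mul_le_mul_of_nonneg_left h1 (by positivity)
  have htsq : t ^ 2 ≤ t := by simpa using htpow_le 1
  have htcb : t ^ 3 ≤ t := by simpa using htpow_le 2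
  have ht2 : 0 < 1 - t := by linarith only [ht1]
  have ht22 : 0 < 1 - t ^ 2 := by linarith only [htsq, hts]
  have ht253 : 0 < 1 - 25 * t ^ 3 := by linarith only [htcb, hts]
  have hP_pos : 0 < P :=
    lt_of_lt_of_le (mul_pos (pow_pos ht2 24) (mul_pos (pow_pos ht22 24) ht253)) hPl
  -- complex identifications
  have hE4 : eisensteinE4 (Complex.I * y) = ((1 + 240 * S : ℝ) : ℂ) := by
    rw [eisensteinE4]
    have h1 : ∀ n : ℕ, (ArithmeticFunction.sigma 3 (n + 1) : ℂ) * nome (Complex.I * y) ^ (n + 1)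
        = (((ArithmeticFunction.sigma 3 (n + 1) : ℝ) * t ^ (n + 1) : ℝ) : ℂ) := by
      intro n
      rw [hnome]
      push_cast
      ring
    rw [tsum_congr h1]
    have h2 : (∑' n : ℕ, (((ArithmeticFunction.sigma 3 (n + 1) : ℝ) * t ^ (n + 1) : ℝ) : ℂ))
        = ((S : ℝ) : ℂ) := by
      rw [hSdef]
      exact (hσsum.map_tsum Complex.ofRealHom Complex.continuous_ofReal).symm
    rw [h2]
    push_cast
    ring
  have hΔ : modularDelta (Complex.I * y) = (((2 * π) ^ 12 * t * P : ℝ) : ℂ) := by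
    rw [modularDelta, hnome]
    have h1 : ∀ n : ℕ, (1 - ((t : ℝ) : ℂ) ^ (n + 1)) ^ 24
        = (((1 - t ^ (n + 1)) ^ 24 : ℝ) : ℂ) := by
      intro n; push_cast; ring
    rw [tprod_congr h1]
    have h2 : (∏' n : ℕ, (((1 - t ^ (n + 1)) ^ 24 : ℝ) : ℂ)) = ((P : ℝ) : ℂ) := by
      rw [hPdef]
      exact (hmul.map_tprod Complex.ofRealHom Complex.continuous_ofReal).symm
    rw [h2]
    push_cast
    ring
  have hJ : (modularJ (Complex.I * y)).re
      = ((2 * π) ^ 12 * (1 + 240 * S) ^ 3) / ((2 * π) ^ 12 * t * P) := by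
    rw [modularJ, hE4, hΔ]
    rw [show (2 * (Real.pi : ℂ)) ^ 12 * (((1 + 240 * S : ℝ) : ℂ)) ^ 3
        / (((2 * π) ^ 12 * t * P : ℝ) : ℂ)
        = ((((2 * π) ^ 12 * (1 + 240 * S) ^ 3 / ((2 * π) ^ 12 * t * P) : ℝ)) : ℂ) by
      push_cast; ring]
    exact Complex.ofReal_re _
  rw [hJ]
  have hπ12 : (0 : ℝ) < (2 * π) ^ 12 := by positivity
  have hcancel : ((2 * π) ^ 12 * (1 + 240 * S) ^ 3) / ((2 * π) ^ 12 * t * P)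
      = (1 + 240 * S) ^ 3 / (t * P) := by
    rw [mul_assoc, mul_div_mul_left _ _ (ne_of_gt hπ12)]
  rw [hcancel]
  have htP : 0 < t * P := mul_pos ht0 hP_pos
  rw [div_le_iff₀ htP]
  have hexp_eq : Real.exp (2 * π * y) * t = 1 := by
    rw [htdef, ← Real.exp_add]
    simp
  -- the main polynomial estimate
  have hA : (1 - 24 * t + 276 * t ^ 2 - 2024 * t ^ 3) ≤ (1 - t) ^ 24 := pow24_lb ht0 hts
  have hB : (1 - 24 * t ^ 2) ≤ (1 - t ^ 2) ^ 24 := by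
    have h := one_add_mul_le_pow (show (-2 : ℝ) ≤ -t ^ 2 by nlinarith) 24
    rw [show (1 : ℝ) - 24 * t ^ 2 = 1 + (24 : ℕ) * (-t ^ 2) by push_cast; ring,
      show (1 : ℝ) - t ^ 2 = 1 + -t ^ 2 by ring]
    exact h
  have hc1 : (0 : ℝ) ≤ 1 - 25 * t ^ 3 := ht253.le
  have hc2 : (0 : ℝ) ≤ 1 - 24 * t ^ 2 := by linarith only [htsq, hts]
  have hc3 : (0 : ℝ) ≤ 1 - 24 * t + 276 * t ^ 2 - 2024 * t ^ 3 := by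
    linarith only [hts, pow_le_pow_left₀ ht0.le hts 3, sq_nonneg t]
  have hcert := poly_cert ht0 hts
  have hkey : (1 + 240 * S) ^ 3 ≤ (1 + 1193 * t) * P := by
    have h240 : 1 + 240 * S ≤ 1 + 240 * (t + 9 * t ^ 2 + 28 * t ^ 3 + 258 * t ^ 4) := by
      linarith only [hS_le]
    have hcube : (1 + 240 * S) ^ 3
        ≤ (1 + 240 * (t + 9 * t ^ 2 + 28 * t ^ 3 + 258 * t ^ 4)) ^ 3 :=
      pow_le_pow_left₀ (by linarith only [hS0]) h240 3
    have hmid : (1 - 24 * t + 276 * t ^ 2 - 2024 * t ^ 3) * ((1 - 24 * t ^ 2) * (1 - 25 * t ^ 3))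
        ≤ (1 - t) ^ 24 * ((1 - t ^ 2) ^ 24 * (1 - 25 * t ^ 3)) := by
      apply mul_le_mul hA
        (mul_le_mul hB (le_refl _) hc1 (by positivity))
        (mul_nonneg hc2 hc1) (by positivity)
    have hmid2 : (1 + 1193 * t) * ((1 - 24 * t + 276 * t ^ 2 - 2024 * t ^ 3) *
        ((1 - 24 * t ^ 2) * (1 - 25 * t ^ 3))) ≤ (1 + 1193 * t) * P := by
      apply mul_le_mul_of_nonneg_left (le_trans hmid hPl) (by linarith only [ht0])
    linarith only [hcube, hcert, hmid2]
  calc (1 + 240 * S) ^ 3 ≤ (1 + 1193 * t) * P := hkey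
    _ = (Real.exp (2 * π * y) + 1193) * (t * P) := by
      calc (1 + 1193 * t) * P = 1 * P + 1193 * (t * P) := by ring
        _ = (Real.exp (2 * π * y) * t) * P + 1193 * (t * P) := by rw [hexp_eq]
        _ = (Real.exp (2 * π * y) + 1193) * (t * P) := by ring
end

section
/- For every τ in the closed fundamental domain F̄, we have −log|Δ(τ)| > log max{1, |j(τ)|} − 29.25. -/
open Real Complex

/-- The closed fundamental domain for `SL₂(ℤ)` acting on the upper half-plane. -/
def closedFD : Set ℂ :=
  {τ : ℂ | 0 < τ.im ∧ -(1 / 2) ≤ τ.re ∧ τ.re ≤ 1 / 2 ∧ 1 ≤ ‖τ‖}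

set_option maxHeartbeats 1000000

namespace NegLogDeltaAux

lemma nat_pow4_le (n : ℕ) : (n+2)^4 ≤ 4^(n+3) := by
  induction n with
  | zero => norm_num
  | succ k ih =>
    rcases k with _ | m
    · norm_num
    · have h : (m+1+1+2)^4 ≤ 4*(m+1+2)^4 := by
        zify
        nlinarith [pow_nonneg (by positivity : (0:ℤ) ≤ (m:ℤ)) 4,
          pow_nonneg (by positivity : (0:ℤ) ≤ (m:ℤ)) 3,
          pow_nonneg (by positivity : (0:ℤ) ≤ (m:ℤ)) 2, Int.natCast_nonneg m]
      calc (m+1+1+2)^4 ≤ 4*(m+1+2)^4 := h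
        _ ≤ 4*4^(m+1+3) := by
            exact Nat.mul_le_mul_left 4 ih
        _ = 4^(m+1+1+3) := by ring

lemma sigma3_le (m : ℕ) : ArithmeticFunction.sigma 3 m ≤ m^4 := by
  rcases Nat.eq_zero_or_pos m with hm | hm
  · simp [hm]
  rw [ArithmeticFunction.sigma_apply]
  have hsub : m.divisors ⊆ Finset.Icc 1 m := by
    intro d hd
    rw [Nat.mem_divisors] at hd
    exact Finset.mem_Icc.mpr ⟨Nat.pos_of_dvd_of_pos hd.1 hm, Nat.le_of_dvd hm hd.1⟩
  calc ∑ d ∈ m.divisors, d^3 ≤ ∑ d ∈ m.divisors, m^3 := by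
        refine Finset.sum_le_sum fun d hd => ?_
        exact Nat.pow_le_pow_left (Nat.divisor_le hd) 3
    _ = m.divisors.card * m^3 := by rw [Finset.sum_const, smul_eq_mul]
    _ ≤ m * m^3 := by
        have h := Finset.card_le_card hsub
        simp [Nat.card_Icc] at h
        exact Nat.mul_le_mul_right _ h
    _ = m^4 := by ring

lemma summable_g : Summable (fun n : ℕ => ((n+1:ℕ):ℝ)^4 * (1/200:ℝ)^(n+1)) := by
  have h : Summable (fun n : ℕ => (n:ℝ)^4 * (1/200:ℝ)^n) :=
    summable_pow_mul_geometric_of_norm_lt_one 4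
      (by rw [Real.norm_eq_abs, _root_.abs_of_nonneg (by norm_num : (0:ℝ) ≤ 1/200)]; norm_num)
  exact (summable_nat_add_iff 1).mpr h

lemma summable_sigma200 :
    Summable (fun n : ℕ => ((ArithmeticFunction.sigma 3 (n+1) : ℕ):ℝ) * (1/200:ℝ)^(n+1)) := by
  refine Summable.of_nonneg_of_le (fun n => by positivity) (fun n => ?_) summable_g
  have := sigma3_le (n+1)
  gcongr
  exact_mod_cast this

lemma tsum_g_le : ∑' n : ℕ, ((n+1:ℕ):ℝ)^4 * (1/200:ℝ)^(n+1) ≤ 1/100 := by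
  rw [Summable.tsum_eq_zero_add summable_g]
  have hgeo2 : Summable (fun n : ℕ => (4:ℝ)*(1/50:ℝ)^(n+2)) := by
    refine (((summable_geometric_of_lt_one (by norm_num : (0:ℝ) ≤ 1/50)
      (by norm_num)).mul_right ((1/50:ℝ)^2)).mul_left 4).congr fun n => ?_
    ring
  have htail : ∑' n : ℕ, ((n+1+1:ℕ):ℝ)^4 * (1/200:ℝ)^(n+1+1) ≤ ∑' n : ℕ, (4:ℝ)*(1/50:ℝ)^(n+2) := by
    refine Summable.tsum_le_tsum (fun n => ?_) ((summable_nat_add_iff 1).mpr summable_g) hgeo2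
    have h4 : ((n+2:ℕ):ℝ)^4 ≤ (4:ℝ)^(n+3) := by
      have := nat_pow4_le n
      calc ((n+2:ℕ):ℝ)^4 = (((n+2)^4 : ℕ):ℝ) := by push_cast; ring
        _ ≤ ((4^(n+3) : ℕ):ℝ) := by exact_mod_cast this
        _ = (4:ℝ)^(n+3) := by push_cast; ring
    calc ((n+1+1:ℕ):ℝ)^4 * (1/200:ℝ)^(n+1+1) ≤ (4:ℝ)^(n+3) * (1/200:ℝ)^(n+2) := by
          have hp : (0:ℝ) ≤ (1/200:ℝ)^(n+2) := by positivity
          have h5 : ((n+1+1:ℕ):ℝ)^4 ≤ (4:ℝ)^(n+3) := by norm_num at h4 ⊢; exact_mod_cast h4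
          nlinarith [h5, hp, pow_nonneg (by positivity : (0:ℝ) ≤ ((n+1+1:ℕ):ℝ)) 4]
      _ = (4:ℝ)*(1/50:ℝ)^(n+2) := by
          rw [pow_succ]
          rw [show (1/50:ℝ) = 4 * (1/200) by norm_num, mul_pow]
          ring
  have htv : ∑' n : ℕ, (4:ℝ)*(1/50:ℝ)^(n+2) = 4 * ((1/50:ℝ)^2 * (1-1/50:ℝ)⁻¹) := by
    calc ∑' n : ℕ, (4:ℝ)*(1/50:ℝ)^(n+2) = ∑' n : ℕ, ((1/50:ℝ)^n) * (4*(1/50)^2) := by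
          refine tsum_congr fun n => ?_; ring
      _ = (1-1/50:ℝ)⁻¹ * (4*(1/50)^2) := by
          rw [tsum_mul_right, tsum_geometric_of_lt_one (by norm_num) (by norm_num)]
      _ = 4 * ((1/50:ℝ)^2 * (1-1/50:ℝ)⁻¹) := by ring
  have h0 : ((0+1:ℕ):ℝ)^4 * (1/200:ℝ)^(0+1) = 1/200 := by norm_num
  rw [h0]
  rw [htv] at htail
  norm_num at htail ⊢
  linarith

lemma tsum_sigma_le :
    ∑' n : ℕ, ((ArithmeticFunction.sigma 3 (n+1) : ℕ):ℝ) * (1/200:ℝ)^(n+1) ≤ 1/100 := by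
  refine le_trans (Summable.tsum_le_tsum (fun n => ?_) summable_sigma200 summable_g) tsum_g_le
  have := sigma3_le (n+1)
  gcongr
  exact_mod_cast this

lemma tsum_geo200 : ∑' n : ℕ, (1/200:ℝ)^(n+1) = (1 - 1/200)⁻¹ * (1/200) := by
  calc ∑' n : ℕ, (1/200:ℝ)^(n+1) = ∑' n : ℕ, (1/200:ℝ)^n * (1/200) := by
        simp [pow_succ]
    _ = (∑' n : ℕ, (1/200:ℝ)^n) * (1/200) := tsum_mul_right
    _ = (1 - 1/200)⁻¹ * (1/200) := by
        rw [tsum_geometric_of_lt_one (by norm_num) (by norm_num)]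

lemma sum_geo200 : Summable (fun n : ℕ => (1/200:ℝ)^(n+1)) := by
  refine ((summable_geometric_of_lt_one (by norm_num : (0:ℝ) ≤ 1/200)
    (by norm_num)).mul_right (1/200)).congr fun n => ?_
  rw [pow_succ]

lemma prod_bound {q : ℂ} (hq : ‖q‖ ≤ 1/200) :
    ‖∏' n : ℕ, (1 - q^(n+1))^24‖ ≤ 3 := by
  by_cases hm : Multipliable (fun n : ℕ => (1 - q^(n+1))^24)
  · have hp := hm.hasProd.map (normHom : ℂ →*₀ ℝ) continuous_norm
    refine le_of_tendsto hp ?_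
    filter_upwards with s
    have key : ∀ n : ℕ, ‖(1 - q^(n+1))^24‖ ≤ Real.exp (24*(1/200:ℝ)^(n+1)) := by
      intro n
      rw [norm_pow]
      have htri : ‖1 - q^(n+1)‖ ≤ 1 + ‖q^(n+1)‖ := by
        have := norm_sub_le (1:ℂ) (q^(n+1))
        simpa using this
      have h1 : ‖1 - q^(n+1)‖ ≤ 1 + (1/200:ℝ)^(n+1) := by
        calc ‖1 - q^(n+1)‖ ≤ 1 + (‖q‖)^(n+1) := by
              rw [← norm_pow]; exact htri
          _ ≤ 1 + (1/200:ℝ)^(n+1) := by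
              gcongr
      have h2 : (1:ℝ) + (1/200:ℝ)^(n+1) ≤ Real.exp ((1/200:ℝ)^(n+1)) := by
        have := Real.add_one_le_exp ((1/200:ℝ)^(n+1)); linarith
      calc (‖1 - q^(n+1)‖)^24 ≤ (Real.exp ((1/200:ℝ)^(n+1)))^24 :=
            pow_le_pow_left₀ (norm_nonneg _) (h1.trans h2) 24
        _ = Real.exp (24*(1/200:ℝ)^(n+1)) := by
            rw [← Real.exp_nat_mul]; norm_num
    calc ∏ n ∈ s, (normHom ∘ fun n : ℕ => (1 - q^(n+1))^24) n
        ≤ ∏ n ∈ s, Real.exp (24*(1/200:ℝ)^(n+1)) := by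
          refine Finset.prod_le_prod (fun n _ => norm_nonneg ((1 - q^(n+1))^24)) (fun n _ => key n)
      _ = Real.exp (∑ n ∈ s, 24*(1/200:ℝ)^(n+1)) := (Real.exp_sum s _).symm
      _ ≤ Real.exp 1 := by
          apply Real.exp_le_exp.mpr
          have hle : ∑ n ∈ s, 24*(1/200:ℝ)^(n+1) ≤ ∑' n : ℕ, 24*(1/200:ℝ)^(n+1) :=
            Summable.sum_le_tsum s (fun i _ => by positivity) (sum_geo200.mul_left 24)
          rw [tsum_mul_left, tsum_geo200] at hle
          linarith [hle]
      _ ≤ 3 := by linarith [Real.exp_one_lt_d9]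
  · rw [tprod_eq_one_of_not_multipliable hm]
    simp

lemma E4_bound {τ : ℂ} (hq : ‖nome τ‖ ≤ 1/200) :
    ‖eisensteinE4 τ‖ ≤ 4 := by
  have hterm : ∀ n : ℕ, ‖(ArithmeticFunction.sigma 3 (n+1) : ℂ) * nome τ ^ (n+1)‖ ≤
      ((ArithmeticFunction.sigma 3 (n+1) : ℕ):ℝ) * (1/200:ℝ)^(n+1) := by
    intro n
    rw [norm_mul, norm_pow]
    have h1 : ‖(ArithmeticFunction.sigma 3 (n+1) : ℂ)‖ =
        ((ArithmeticFunction.sigma 3 (n+1) : ℕ):ℝ) := by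
      rw [Complex.norm_natCast]
    rw [h1]
    gcongr
  have hs : Summable (fun n : ℕ => ‖(ArithmeticFunction.sigma 3 (n+1) : ℂ) * nome τ ^ (n+1)‖) :=
    Summable.of_nonneg_of_le (fun n => norm_nonneg _) hterm summable_sigma200
  have hS : ‖∑' n : ℕ, (ArithmeticFunction.sigma 3 (n+1) : ℂ) * nome τ ^ (n+1)‖ ≤ 1/100 := by
    refine (norm_tsum_le_tsum_norm hs).trans ?_
    exact (Summable.tsum_le_tsum hterm hs summable_sigma200).trans tsum_sigma_le
  rw [eisensteinE4]
  calc ‖(1:ℂ) + 240 * ∑' n : ℕ, (ArithmeticFunction.sigma 3 (n+1) : ℂ) * nome τ ^ (n+1)‖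
      ≤ ‖(1:ℂ)‖ + ‖(240:ℂ)‖ * ‖∑' n : ℕ, (ArithmeticFunction.sigma 3 (n+1) : ℂ) * nome τ ^ (n+1)‖ := by
        refine (norm_add_le _ _).trans ?_
        rw [norm_mul]
    _ ≤ 1 + 240 * (1/100) := by
        rw [norm_one]
        have h240 : ‖(240:ℂ)‖ = 240 := by norm_num
        rw [h240]
        gcongr
    _ ≤ 4 := by norm_num

lemma nome_small {τ : ℂ} (hτ : τ ∈ closedFD) : ‖nome τ‖ ≤ 1/200 := by
  obtain ⟨him, hre1, hre2, hab⟩ := hτ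
  have h1 : (1:ℝ) ≤ τ.re * τ.re + τ.im * τ.im := by
    have h2 : (1:ℝ) ≤ (‖τ‖)^2 := by nlinarith [hab]
    rwa [Complex.sq_norm, Complex.normSq_apply] at h2
  have him2 : (0.866:ℝ) ≤ τ.im := by nlinarith [him, hre1, hre2, h1]
  have h : ‖nome τ‖ = Real.exp (-(2 * Real.pi * τ.im)) := by
    rw [nome, Complex.norm_exp]; congr 1; simp [Complex.mul_re, Complex.mul_im]
  rw [h]
  have hpi := Real.pi_gt_d6
  have h543 : (5.43:ℝ) ≤ 2 * Real.pi * τ.im := by nlinarith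
  have hmono : Real.exp (-(2 * Real.pi * τ.im)) ≤ Real.exp (-5.43) :=
    Real.exp_le_exp.mpr (by linarith)
  refine hmono.trans ?_
  rw [Real.exp_neg]
  have h200 : (200:ℝ) ≤ Real.exp 5.43 := by
    have h5 : Real.exp 5 = Real.exp 1 ^ 5 := by rw [← Real.exp_nat_mul]; norm_num
    have h1' : (2.7182818283:ℝ)^5 ≤ Real.exp 1 ^ 5 :=
      pow_le_pow_left₀ (by norm_num) Real.exp_one_gt_d9.le 5
    have h2' : (1.43:ℝ) ≤ Real.exp 0.43 := by
      have := Real.add_one_le_exp (0.43:ℝ); linarith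
    have h3 : Real.exp 5.43 = Real.exp 0.43 * Real.exp 5 := by rw [← Real.exp_add]; norm_num
    rw [h3, h5]; nlinarith [Real.exp_pos (0.43:ℝ)]
  rw [inv_le_comm₀ (Real.exp_pos _) (by norm_num)]
  linarith

lemma key_numeric : (6.3:ℝ)^12 * 64 < Real.exp 29.25 := by
  have h29 : Real.exp 29 = Real.exp 1 ^ 29 := by rw [← Real.exp_nat_mul]; norm_num
  have h1 : (2.7:ℝ)^29 ≤ Real.exp 1 ^ 29 :=
    pow_le_pow_left₀ (by norm_num) (by nlinarith [Real.exp_one_gt_d9]) 29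
  have h2 : Real.exp 29 ≤ Real.exp 29.25 := Real.exp_le_exp.mpr (by norm_num)
  nlinarith [h1, h2, h29]

lemma two_pi_pow_le : ((2*Real.pi:ℝ))^12 ≤ (6.3:ℝ)^12 := by
  have := Real.pi_lt_d2
  exact pow_le_pow_left₀ (by positivity) (by linarith) 12

lemma abs_two_pi : ‖2 * (Real.pi:ℂ)‖ = 2 * Real.pi := by
  have h : (2 * (Real.pi:ℂ)) = ((2*Real.pi:ℝ):ℂ) := by push_cast; ring
  rw [h, Complex.norm_of_nonneg (by positivity)]

lemma delta_abs_lt {τ : ℂ} (hτ : τ ∈ closedFD) :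
    ‖modularDelta τ‖ < Real.exp 29.25 := by
  have hq := nome_small hτ
  have hP := prod_bound hq
  rw [modularDelta]
  rw [norm_mul, norm_mul, norm_pow, abs_two_pi]
  have h1 : ((2*Real.pi:ℝ))^12 ≤ (6.3:ℝ)^12 := two_pi_pow_le
  have h2 : (0:ℝ) < (6.3:ℝ)^12 := by positivity
  have h3 : (0:ℝ) ≤ ‖nome τ‖ := norm_nonneg _
  have h4 : (0:ℝ) ≤ ‖∏' n : ℕ, (1 - nome τ^(n+1))^24‖ := norm_nonneg _
  have h5 : (0:ℝ) ≤ ((2*Real.pi:ℝ))^12 := by positivity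
  calc (2*Real.pi)^12 * ‖nome τ‖ * ‖∏' n : ℕ, (1 - nome τ^(n+1))^24‖
      ≤ (6.3:ℝ)^12 * (1/200) * 3 := by
        apply mul_le_mul _ hP h4 (by positivity)
        exact mul_le_mul h1 hq h3 (by positivity)
    _ < Real.exp 29.25 := by nlinarith [key_numeric, h2]

end NegLogDeltaAux

open NegLogDeltaAux in
theorem neg_log_abs_modularDelta_gt {τ : ℂ} (hτ : τ ∈ closedFD) :
    -Real.log ‖modularDelta τ‖ >
      Real.log (max 1 ‖modularJ τ‖) - 29.25 := by
  have hq := nome_small hτ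
  by_cases hj : ‖modularJ τ‖ ≤ 1
  · rw [max_eq_left hj, Real.log_one]
    have h : Real.log (‖modularDelta τ‖) < 29.25 := by
      rcases eq_or_lt_of_le (norm_nonneg (modularDelta τ)) with h0 | h0
      · rw [← h0, Real.log_zero]; norm_num
      · rw [Real.log_lt_iff_lt_exp h0]
        exact delta_abs_lt hτ
    linarith
  · push_neg at hj
    rw [max_eq_right hj.le]
    have hN : ‖(2 * (Real.pi:ℂ)) ^ 12 * eisensteinE4 τ ^ 3‖ < Real.exp 29.25 := by
      rw [norm_mul, norm_pow, norm_pow, abs_two_pi]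
      have hE := E4_bound hq
      have h1 : ((2*Real.pi:ℝ))^12 ≤ (6.3:ℝ)^12 := two_pi_pow_le
      have h2 : (‖eisensteinE4 τ‖)^3 ≤ 64 := by
        calc (‖eisensteinE4 τ‖)^3 ≤ 4^3 :=
              pow_le_pow_left₀ (norm_nonneg _) hE 3
          _ = 64 := by norm_num
      calc (2*Real.pi)^12 * (‖eisensteinE4 τ‖)^3 ≤ (6.3:ℝ)^12 * 64 := by
            apply mul_le_mul h1 h2 (by positivity) (by positivity)
        _ < Real.exp 29.25 := key_numeric
    have habj : ‖modularJ τ‖ =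
        ‖(2 * (Real.pi:ℂ)) ^ 12 * eisensteinE4 τ ^ 3‖ /
          ‖modularDelta τ‖ := by
      rw [modularJ, norm_div]
    have hΔ : ‖modularDelta τ‖ ≠ 0 := by
      intro h0
      rw [habj, h0, div_zero] at hj
      norm_num at hj
    have hNne : ‖(2 * (Real.pi:ℂ)) ^ 12 * eisensteinE4 τ ^ 3‖ ≠ 0 := by
      intro h0
      rw [habj, h0, zero_div] at hj
      norm_num at hj
    rw [habj, Real.log_div hNne hΔ]
    have hNpos : 0 < ‖(2 * (Real.pi:ℂ)) ^ 12 * eisensteinE4 τ ^ 3‖ :=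
      lt_of_le_of_ne (norm_nonneg _) (Ne.symm hNne)
    have hlogN : Real.log (‖(2 * (Real.pi:ℂ)) ^ 12 * eisensteinE4 τ ^ 3‖) < 29.25 := by
      rw [Real.log_lt_iff_lt_exp hNpos]
      exact hN
    linarith
end

section
/- Let 0 < q < 1 and 0 < t < 1. Then ∑_{n≥1} log|(1−(−qt)^n)/(1−(−q)^n)| ≤ −q(1−t)/(1+q) − q³(1−t³)/(1+q³) − 1/((1−q²)(1−q²t²)) + 1/(1−q²)². -/
open Real

private lemma log_abs_one_sub_summable {r : ℝ} (hr : |r| < 1) :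
    Summable (fun n : ℕ => Real.log |1 - r ^ (n + 1)|) := by
  have h0r : (0:ℝ) ≤ |r| := abs_nonneg r
  have h1r : (0:ℝ) < 1 - |r| := by linarith
  have hb : ∀ n : ℕ, ‖Real.log |1 - r ^ (n + 1)|‖ ≤ (1 / (1 - |r|)) * |r| ^ (n + 1) := by
    intro n
    have habs : |r ^ (n + 1)| = |r| ^ (n + 1) := abs_pow r (n + 1)
    have hle : |r ^ (n + 1)| ≤ |r| := by
      rw [habs]; exact pow_le_of_le_one h0r hr.le n.succ_ne_zero
    have hxa : r ^ (n + 1) ≤ |r| ^ (n + 1) := habs ▸ le_abs_self _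
    have hxn : -(|r| ^ (n + 1)) ≤ r ^ (n + 1) := habs ▸ neg_abs_le _
    have hal : |r| ^ (n + 1) ≤ |r| := habs ▸ hle
    have hpos : 0 < 1 - r ^ (n + 1) := by linarith
    have hann : (0:ℝ) ≤ |r| ^ (n + 1) := by positivity
    rw [abs_of_pos hpos, Real.norm_eq_abs, abs_le]
    have hgoal_eq : (1 / (1 - |r|)) * |r| ^ (n + 1) = |r| ^ (n + 1) / (1 - |r|) := by ring
    constructor
    · have h := Real.log_le_sub_one_of_pos (inv_pos.mpr hpos)
      rw [Real.log_inv] at h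
      have heq : (1 - r ^ (n + 1))⁻¹ - 1 = r ^ (n + 1) / (1 - r ^ (n + 1)) := by
        field_simp
        ring
      have hkey : r ^ (n + 1) / (1 - r ^ (n + 1)) ≤ |r| ^ (n + 1) / (1 - |r|) := by
        rw [div_le_div_iff₀ hpos h1r]
        nlinarith
      rw [hgoal_eq]
      linarith [heq ▸ h]
    · have h := Real.log_le_sub_one_of_pos hpos
      have : |r| ^ (n + 1) ≤ |r| ^ (n + 1) / (1 - |r|) := by
        rw [le_div_iff₀ h1r]; nlinarith
      rw [hgoal_eq]
      linarith
  apply Summable.of_norm_bounded ?_ hb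
  apply Summable.mul_left
  exact ((summable_geometric_of_lt_one h0r hr).mul_left |r|).congr (fun n => by ring)

theorem tsum_log_ratio_bound {q t : ℝ} (hq0 : 0 < q) (hq1 : q < 1) (ht0 : 0 < t)
    (ht1 : t < 1) :
    (∑' n : ℕ, Real.log (|(1 - (-(q * t)) ^ (n + 1)) / (1 - (-q) ^ (n + 1))|)) ≤
      -(q * (1 - t)) / (1 + q) - q ^ 3 * (1 - t ^ 3) / (1 + q ^ 3)
        - 1 / ((1 - q ^ 2) * (1 - q ^ 2 * t ^ 2)) + 1 / (1 - q ^ 2) ^ 2 := by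
  have hqt0 : 0 < q * t := mul_pos hq0 ht0
  have hqt1 : q * t < 1 := by nlinarith
  have haq : |(-q)| < 1 := by rw [abs_neg, abs_of_pos hq0]; exact hq1
  have haqt : |(-(q * t))| < 1 := by rw [abs_neg, abs_of_pos hqt0]; exact hqt1
  have hposq : ∀ n : ℕ, 0 < 1 - (-q) ^ (n + 1) := by
    intro n
    have : |(-q) ^ (n + 1)| ≤ |(-q)| := by
      rw [abs_pow]; exact pow_le_of_le_one (abs_nonneg _) haq.le n.succ_ne_zero
    have := le_trans (le_abs_self _) this
    linarith [haq]
  have hposqt : ∀ n : ℕ, 0 < 1 - (-(q * t)) ^ (n + 1) := by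
    intro n
    have : |(-(q * t)) ^ (n + 1)| ≤ |(-(q * t))| := by
      rw [abs_pow]; exact pow_le_of_le_one (abs_nonneg _) haqt.le n.succ_ne_zero
    have := le_trans (le_abs_self _) this
    linarith [haqt]
  set g : ℕ → ℝ := fun n => ((-q) ^ (n + 1) * (1 - t ^ (n + 1))) / (1 - (-q) ^ (n + 1))
    with hg_def
  -- pointwise bound: log term ≤ g n
  have hfg : ∀ n : ℕ, Real.log (|(1 - (-(q * t)) ^ (n + 1)) / (1 - (-q) ^ (n + 1))|) ≤ g n := by
    intro n
    have hu : 0 < (1 - (-(q * t)) ^ (n + 1)) / (1 - (-q) ^ (n + 1)) :=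
      div_pos (hposqt n) (hposq n)
    rw [abs_of_pos hu]
    refine le_trans (Real.log_le_sub_one_of_pos hu) ?_
    have hne := (hposq n).ne'
    have hpow : (-(q * t)) ^ (n + 1) = (-q) ^ (n + 1) * t ^ (n + 1) := by
      rw [show -(q * t) = (-q) * t by ring, mul_pow]
    have key : (1 - (-(q * t)) ^ (n + 1)) / (1 - (-q) ^ (n + 1)) - 1 = g n := by
      rw [hg_def, hpow]
      field_simp
      ring
    rw [key]
  -- summability of the log terms
  have hsf : Summable (fun n : ℕ =>
      Real.log (|(1 - (-(q * t)) ^ (n + 1)) / (1 - (-q) ^ (n + 1))|)) := by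
    have h1 := log_abs_one_sub_summable haqt
    have h2 := log_abs_one_sub_summable haq
    apply (h1.sub h2).congr
    intro n
    rw [abs_div, Real.log_div (by rw [abs_of_pos (hposqt n)]; exact (hposqt n).ne')
      (by rw [abs_of_pos (hposq n)]; exact (hposq n).ne')]
  -- summability of g
  have hq1' : (0:ℝ) < 1 - q := by linarith
  have hsg : Summable g := by
    apply Summable.of_norm_bounded (g := fun n : ℕ => (1 / (1 - q)) * q ^ (n + 1))
    · apply Summable.mul_left
      exact ((summable_geometric_of_lt_one hq0.le hq1).mul_left q).congr (fun n => by ring)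
    · intro n
      rw [hg_def, Real.norm_eq_abs, abs_div, abs_of_pos (hposq n), abs_mul, abs_pow, abs_neg,
        abs_of_pos hq0]
      have htp : 0 < t ^ (n + 1) := pow_pos ht0 _
      have htp1 : t ^ (n + 1) ≤ 1 := pow_le_one₀ ht0.le ht1.le
      have h1 : |1 - t ^ (n + 1)| ≤ 1 := by rw [abs_of_nonneg (by linarith)]; linarith
      have hd : 1 - q ≤ 1 - (-q) ^ (n + 1) := by
        have : (-q) ^ (n + 1) ≤ q := by
          calc (-q) ^ (n + 1) ≤ |(-q) ^ (n + 1)| := le_abs_self _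
            _ ≤ q := by
              rw [abs_pow, abs_neg, abs_of_pos hq0]
              exact pow_le_of_le_one hq0.le hq1.le n.succ_ne_zero
        linarith
      rw [div_le_iff₀ (hposq n)]
      have hqp : (0:ℝ) < q ^ (n + 1) := pow_pos hq0 _
      calc q ^ (n + 1) * |1 - t ^ (n + 1)| ≤ q ^ (n + 1) := by nlinarith
        _ = 1 / (1 - q) * q ^ (n + 1) * (1 - q) := by field_simp
        _ ≤ 1 / (1 - q) * q ^ (n + 1) * (1 - (-q) ^ (n + 1)) :=
            mul_le_mul_of_nonneg_left hd (by positivity)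
  have h1 : (∑' n : ℕ, Real.log (|(1 - (-(q * t)) ^ (n + 1)) / (1 - (-q) ^ (n + 1))|))
      ≤ ∑' n, g n := Summable.tsum_le_tsum hfg hsf hsg
  refine le_trans h1 ?_
  have hse : Summable (fun k : ℕ => g (2 * k)) :=
    hsg.comp_injective (fun a b h => by omega)
  have hso : Summable (fun k : ℕ => g (2 * k + 1)) :=
    hsg.comp_injective (fun a b h => by omega)
  rw [← tsum_even_add_odd hse hso]
  have hq2 : (0:ℝ) < 1 - q ^ 2 := by nlinarith
  have hqt2 : (0:ℝ) < 1 - q ^ 2 * t ^ 2 := by nlinarith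
  -- even-index part: g(2k) ≤ 0, keep only k = 0, 1
  have hA : (∑' k : ℕ, g (2 * k)) ≤
      -(q * (1 - t)) / (1 + q) - q ^ 3 * (1 - t ^ 3) / (1 + q ^ 3) := by
    have hnonpos : ∀ k : ℕ, g (2 * k) ≤ 0 := by
      intro k
      rw [hg_def]
      simp only
      have hodd : (-q) ^ (2 * k + 1) = -(q ^ (2 * k + 1)) := Odd.neg_pow ⟨k, by ring⟩ q
      rw [hodd]
      apply div_nonpos_of_nonpos_of_nonneg
      · have h1 : t ^ (2 * k + 1) ≤ 1 := pow_le_one₀ ht0.le ht1.le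
        have h2 : (0:ℝ) ≤ q ^ (2 * k + 1) := by positivity
        nlinarith
      · have h2 : (0:ℝ) ≤ q ^ (2 * k + 1) := by positivity
        linarith
    set h : ℕ → ℝ := fun k => if k = 0 then g 0 else if k = 1 then g 2 else 0 with hh_def
    have hbd : ∀ k : ℕ, g (2 * k) ≤ h k := by
      intro k
      rw [hh_def]
      match k with
      | 0 => simp
      | 1 => simp
      | (n+2) => simpa using hnonpos (n + 2)
    have hsh : Summable h := by
      apply summable_of_ne_finset_zero (s := {0, 1})
      intro k hk
      simp only [Finset.mem_insert, Finset.mem_singleton, not_or] at hk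
      rw [hh_def]; simp [hk.1, hk.2]
    refine le_trans (Summable.tsum_le_tsum hbd hse hsh) ?_
    have hth : (∑' k, h k) = g 0 + g 2 := by
      rw [tsum_eq_sum (s := {0, 1}) (by
        intro k hk
        simp only [Finset.mem_insert, Finset.mem_singleton, not_or] at hk
        rw [hh_def]; simp [hk.1, hk.2])]
      rw [Finset.sum_insert (by simp), Finset.sum_singleton]
      rw [hh_def]
      norm_num
    rw [hth]
    have e0 : g 0 = -(q * (1 - t)) / (1 + q) := by
      rw [hg_def]; norm_num
    have e2 : g 2 = -(q ^ 3 * (1 - t ^ 3)) / (1 + q ^ 3) := by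
      rw [hg_def]
      simp only
      norm_num
      rw [Odd.neg_pow ⟨1, by ring⟩ q]
      ring_nf
    rw [e0, e2]
    apply le_of_eq
    ring
  -- odd-index part
  have hB : (∑' k : ℕ, g (2 * k + 1)) ≤
      1 / (1 - q ^ 2) ^ 2 - 1 / ((1 - q ^ 2) * (1 - q ^ 2 * t ^ 2)) := by
    set u : ℕ → ℝ := fun k => ((q ^ 2) ^ (k + 1) - (q ^ 2 * t ^ 2) ^ (k + 1)) / (1 - q ^ 2)
      with hu_def
    have hq2l1 : q ^ 2 < 1 := by nlinarith
    have hqt2l1 : q ^ 2 * t ^ 2 < 1 := by nlinarith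
    have hq2nn : (0:ℝ) ≤ q ^ 2 := by positivity
    have hqt2nn : (0:ℝ) ≤ q ^ 2 * t ^ 2 := by positivity
    have hbd : ∀ k : ℕ, g (2 * k + 1) ≤ u k := by
      intro k
      rw [hg_def, hu_def]
      simp only
      have hev : (-q) ^ (2 * k + 1 + 1) = (q ^ 2) ^ (k + 1) := by
        rw [show 2 * k + 1 + 1 = 2 * (k + 1) by ring, pow_mul, neg_sq]
      have htev : t ^ (2 * k + 1 + 1) = (t ^ 2) ^ (k + 1) := by
        rw [show 2 * k + 1 + 1 = 2 * (k + 1) by ring, pow_mul]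
      rw [hev, htev]
      have hnum : (q ^ 2) ^ (k + 1) * (1 - (t ^ 2) ^ (k + 1)) =
          (q ^ 2) ^ (k + 1) - (q ^ 2 * t ^ 2) ^ (k + 1) := by
        rw [mul_pow]; ring
      rw [hnum]
      have ht2 : t ^ 2 ≤ 1 := by nlinarith
      have hq2t2 : q ^ 2 * t ^ 2 ≤ q ^ 2 := by nlinarith
      have hnumnn : (0:ℝ) ≤ (q ^ 2) ^ (k + 1) - (q ^ 2 * t ^ 2) ^ (k + 1) := by
        have := pow_le_pow_left₀ hqt2nn hq2t2 (k + 1)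
        linarith
      have hdle : 1 - q ^ 2 ≤ 1 - (q ^ 2) ^ (k + 1) := by
        have : (q ^ 2) ^ (k + 1) ≤ q ^ 2 :=
          pow_le_of_le_one hq2nn hq2l1.le k.succ_ne_zero
        linarith
      exact div_le_div_of_nonneg_left hnumnn hq2 hdle
    have hgeo1 : Summable (fun k : ℕ => (q ^ 2) ^ (k + 1)) :=
      ((summable_geometric_of_lt_one hq2nn hq2l1).mul_left (q ^ 2)).congr (fun n => by ring)
    have hgeo2 : Summable (fun k : ℕ => (q ^ 2 * t ^ 2) ^ (k + 1)) :=
      ((summable_geometric_of_lt_one hqt2nn hqt2l1).mul_left (q ^ 2 * t ^ 2)).congr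
        (fun n => by ring)
    have hsu : Summable u := by
      apply Summable.congr ((hgeo1.sub hgeo2).div_const (1 - q ^ 2))
      intro n; rw [hu_def]
    refine le_trans (Summable.tsum_le_tsum hbd hso hsu) ?_
    have ht1eq : (∑' k : ℕ, (q ^ 2) ^ (k + 1)) = q ^ 2 / (1 - q ^ 2) := by
      calc (∑' k : ℕ, (q ^ 2) ^ (k + 1)) = ∑' k : ℕ, q ^ 2 * (q ^ 2) ^ k := by
            congr 1; funext k; ring
        _ = q ^ 2 * (1 - q ^ 2)⁻¹ := by
            rw [tsum_mul_left, tsum_geometric_of_lt_one hq2nn hq2l1]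
        _ = q ^ 2 / (1 - q ^ 2) := by rw [div_eq_mul_inv]
    have ht2eq : (∑' k : ℕ, (q ^ 2 * t ^ 2) ^ (k + 1)) =
        q ^ 2 * t ^ 2 / (1 - q ^ 2 * t ^ 2) := by
      calc (∑' k : ℕ, (q ^ 2 * t ^ 2) ^ (k + 1))
            = ∑' k : ℕ, q ^ 2 * t ^ 2 * (q ^ 2 * t ^ 2) ^ k := by
            congr 1; funext k; ring
        _ = q ^ 2 * t ^ 2 * (1 - q ^ 2 * t ^ 2)⁻¹ := by
            rw [tsum_mul_left, tsum_geometric_of_lt_one hqt2nn hqt2l1]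
        _ = q ^ 2 * t ^ 2 / (1 - q ^ 2 * t ^ 2) := by rw [div_eq_mul_inv]
    have htu : (∑' k, u k) = (q ^ 2 / (1 - q ^ 2) - q ^ 2 * t ^ 2 / (1 - q ^ 2 * t ^ 2))
        / (1 - q ^ 2) := by
      calc (∑' k, u k)
          = (∑' k, ((q ^ 2) ^ (k + 1) - (q ^ 2 * t ^ 2) ^ (k + 1))) / (1 - q ^ 2) := by
            rw [hu_def, tsum_div_const]
        _ = ((∑' k, (q ^ 2) ^ (k + 1)) - ∑' k, (q ^ 2 * t ^ 2) ^ (k + 1)) / (1 - q ^ 2) := by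
            rw [Summable.tsum_sub hgeo1 hgeo2]
        _ = _ := by rw [ht1eq, ht2eq]
    rw [htu]
    apply le_of_eq
    field_simp
    ring
  calc (∑' k : ℕ, g (2 * k)) + (∑' k : ℕ, g (2 * k + 1))
      ≤ (-(q * (1 - t)) / (1 + q) - q ^ 3 * (1 - t ^ 3) / (1 + q ^ 3)) +
        (1 / (1 - q ^ 2) ^ 2 - 1 / ((1 - q ^ 2) * (1 - q ^ 2 * t ^ 2))) := add_le_add hA hB
    _ = _ := by ring
end

section
/- Let n ≥ 1 and p a prime with p ≡ (−1)^n (mod 9). Then there exists a monic polynomial f ∈ ℤ[X] of degree n of the form f(X) = (X−1)^n + ∑_{k=1}^n 9^k b_k (X−1)^{n−k} with integers b_k, such that f(0) = p and f is Eisenstein at p (i.e., all non-leading coefficients of f in the standard basis are divisible by p, and the constant term f(0) = p is not divisible by p²). -/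
open Polynomial

private lemma neg_one_pow_mul_self (m : ℕ) : ((-1 : ℤ) ^ m) * (-1 : ℤ) ^ m = 1 := by
  rw [← pow_add]
  exact Even.neg_one_pow ⟨m, rfl⟩

private lemma aux_alt_sum (n : ℕ) (hn : 1 ≤ n) :
    ∑ k ∈ Finset.Icc 2 n, (-1 : ℤ) ^ (n - k) * (n.choose k : ℤ) =
      -(-1 : ℤ) ^ n - (-1 : ℤ) ^ (n - 1) * n := by
  have hK : ∑ k ∈ Finset.range (n + 1), (-1 : ℤ) ^ (n - k) * (n.choose k : ℤ) = 0 := by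
    have hcongr : ∀ j ∈ Finset.range (n + 1),
        (-1 : ℤ) ^ (n - (n + 1 - 1 - j)) * (n.choose (n + 1 - 1 - j) : ℤ) =
          (-1 : ℤ) ^ j * (n.choose j : ℤ) := by
      intro j hj
      simp only [Finset.mem_range] at hj
      have hj' : j ≤ n := by omega
      rw [show n + 1 - 1 - j = n - j from by omega, Nat.sub_sub_self hj', Nat.choose_symm hj']
    rw [← Finset.sum_range_reflect, Finset.sum_congr rfl hcongr,
      Int.alternating_sum_range_choose_of_ne (by omega)]
  have hsplit : Finset.range (n + 1) = insert 0 (insert 1 (Finset.Icc 2 n)) := by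
    ext k
    simp only [Finset.mem_range, Finset.mem_insert, Finset.mem_Icc]
    omega
  rw [hsplit, Finset.sum_insert (by simp), Finset.sum_insert (by simp)] at hK
  simp only [Nat.sub_zero, Nat.choose_zero_right, Nat.cast_one, mul_one,
    Nat.choose_one_right] at hK
  linarith

theorem exists_eisenstein_poly_special_form {n : ℕ} (hn : 1 ≤ n) {p : ℕ} (hp : p.Prime)
    (hcong : (p : ℤ) ≡ (-1) ^ n [ZMOD 9]) :
    ∃ (b : ℕ → ℤ) (f : ℤ[X]),
      f = (X - 1) ^ n + ∑ k ∈ Finset.Icc 1 n, C (9 ^ k * b k) * (X - 1) ^ (n - k) ∧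
      f.Monic ∧ f.natDegree = n ∧ f.eval 0 = (p : ℤ) ∧
      f.IsEisensteinAt (Ideal.span {(p : ℤ)}) := by
  have hq2 : (2 : ℤ) ≤ (p : ℤ) := by exact_mod_cast hp.two_le
  have hq9 : (9 : ℤ) ∣ (p : ℤ) - (-1) ^ n := dvd_sub_comm.mp hcong.dvd
  -- p is not divisible by 3
  have hp3 : ¬ (3 : ℕ) ∣ p := by
    intro h3
    have h3' : (3 : ℤ) ∣ (p : ℤ) := by exact_mod_cast h3
    have h39 : (3 : ℤ) ∣ (p : ℤ) - (-1) ^ n := dvd_trans (by norm_num) hq9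
    have : (3 : ℤ) ∣ (-1 : ℤ) ^ n := by
      have := dvd_sub h3' h39
      simpa using this
    rcases Nat.even_or_odd n with he | ho
    · rw [he.neg_one_pow] at this; norm_num at this
    · rw [ho.neg_one_pow] at this; norm_num at this
  have hcop : IsCoprime (9 : ℤ) (p : ℤ) := by
    have h3 : Nat.Coprime 3 p := (Nat.prime_three.coprime_iff_not_dvd).mpr hp3
    have h9 : Nat.Coprime 9 p := by
      have := Nat.Coprime.pow_left 2 h3
      norm_num at this
      exact this
    exact_mod_cast Nat.isCoprime_iff_coprime.mpr h9
  obtain ⟨u, v, huv⟩ := hcop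
  have hu : (p : ℤ) ∣ 9 * u - 1 := ⟨-v, by linarith⟩
  -- the auxiliary sum S
  set S : ℤ := ∑ k ∈ Finset.Icc 2 n, 9 ^ k * (u ^ k * (n.choose k : ℤ)) * (-1) ^ (n - k) with hSdef
  set S' : ℤ := ∑ k ∈ Finset.Icc 2 n, (-1 : ℤ) ^ (n - k) * (n.choose k : ℤ) with hS'def
  have hS9 : (9 : ℤ) ∣ S := by
    apply Finset.dvd_sum
    intro k hk
    simp only [Finset.mem_Icc] at hk
    exact dvd_mul_of_dvd_left (dvd_mul_of_dvd_left (dvd_pow_self 9 (by omega)) _) _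
  have hA : (9 : ℤ) ∣ (p : ℤ) - (-1) ^ n - S := dvd_sub hq9 hS9
  obtain ⟨c, hc⟩ := hA
  have hSS' : (p : ℤ) ∣ S - S' := by
    rw [hSdef, hS'def, ← Finset.sum_sub_distrib]
    apply Finset.dvd_sum
    intro k hk
    have hterm : (9 : ℤ) ^ k * (u ^ k * (n.choose k : ℤ)) * (-1) ^ (n - k) -
        (-1 : ℤ) ^ (n - k) * (n.choose k : ℤ) =
        ((9 * u) ^ k - 1 ^ k) * ((n.choose k : ℤ) * (-1) ^ (n - k)) := by
      rw [mul_pow, one_pow]; ring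
    rw [hterm]
    exact Dvd.dvd.mul_right (hu.trans (sub_dvd_pow_sub_pow _ _ k)) _
  have hS'val := aux_alt_sum n hn
  rw [← hS'def] at hS'val
  have hsq := neg_one_pow_mul_self (n - 1)
  -- the coefficients b
  set b : ℕ → ℤ := fun k => if k = 1 then (-1) ^ (n - 1) * c else u ^ k * (n.choose k : ℤ)
    with hbdef
  have hb1 : b 1 = (-1) ^ (n - 1) * c := by simp [hbdef]
  have hbk : ∀ k, k ≠ 1 → b k = u ^ k * (n.choose k : ℤ) := by
    intro k hk; simp [hbdef, hk]
  -- key divisibility of the coefficients in the (X-1)-basis minus binomials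
  have hdvd : ∀ k ∈ Finset.Icc 1 n, (p : ℤ) ∣ 9 ^ k * b k - (n.choose k : ℤ) := by
    intro k hk
    simp only [Finset.mem_Icc] at hk
    by_cases hk1 : k = 1
    · subst hk1
      obtain ⟨w, hw⟩ := hSS'
      refine ⟨(-1) ^ (n - 1) * (1 - w), ?_⟩
      rw [hb1, Nat.choose_one_right, pow_one]
      linear_combination (-(-1 : ℤ) ^ (n - 1)) * hc - (-1 : ℤ) ^ (n - 1) * hw -
        (-1 : ℤ) ^ (n - 1) * hS'val + (n : ℤ) * hsq
    · rw [hbk k hk1]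
      have hterm : (9 : ℤ) ^ k * (u ^ k * (n.choose k : ℤ)) - (n.choose k : ℤ) =
          ((9 * u) ^ k - 1 ^ k) * (n.choose k : ℤ) := by
        rw [mul_pow, one_pow]; ring
      rw [hterm]
      exact Dvd.dvd.mul_right (hu.trans (sub_dvd_pow_sub_pow _ _ k)) _
  -- degree facts
  have hmonpow : ((X - 1 : ℤ[X]) ^ n).Monic := by
    have hx : (X - 1 : ℤ[X]) = X - C 1 := by rw [C_1]
    rw [hx]; exact (monic_X_sub_C (1 : ℤ)).pow n
  have hdegpow : ((X - 1 : ℤ[X]) ^ n).degree = (n : WithBot ℕ) := by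
    have hx : (X - 1 : ℤ[X]) = X - C 1 := by rw [C_1]
    rw [hx, degree_pow, degree_X_sub_C]
    simp
  set f : ℤ[X] := (X - 1) ^ n + ∑ k ∈ Finset.Icc 1 n, C (9 ^ k * b k) * (X - 1) ^ (n - k)
    with hfdef
  have hdegsum : (∑ k ∈ Finset.Icc 1 n, C (9 ^ k * b k) * (X - 1) ^ (n - k)).degree <
      ((X - 1 : ℤ[X]) ^ n).degree := by
    rw [hdegpow]
    refine lt_of_le_of_lt (Polynomial.degree_sum_le _ _) ?_
    rw [Finset.sup_lt_iff (by exact WithBot.bot_lt_coe n)]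
    intro k hk
    simp only [Finset.mem_Icc] at hk
    refine lt_of_le_of_lt (le_trans (degree_mul_le _ _)
      (by simpa using add_le_add_left (degree_C_le (a := 9 ^ k * b k)) _)) ?_
    have hdx : (X - 1 : ℤ[X]).degree = 1 := by
      rw [show (X - 1 : ℤ[X]) = X - C 1 from by rw [C_1]]
      exact degree_X_sub_C 1
    rw [hdx, mul_one]
    exact_mod_cast (show n - k < n by omega)
  have hfm : f.Monic := hmonpow.add_of_left hdegsum
  have hfdeg : f.degree = (n : WithBot ℕ) := by
    rw [hfdef, degree_add_eq_left_of_degree_lt hdegsum, hdegpow]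
  have hnd : f.natDegree = n := natDegree_eq_of_degree_eq_some hfdeg
  -- evaluation at 0
  have hsumS : ∑ k ∈ Finset.Icc 2 n, 9 ^ k * b k * (-1 : ℤ) ^ (n - k) = S := by
    rw [hSdef]
    refine Finset.sum_congr rfl fun k hk => ?_
    simp only [Finset.mem_Icc] at hk
    rw [hbk k (by omega)]
  have heval : f.eval 0 = (p : ℤ) := by
    rw [hfdef]
    simp only [eval_add, eval_pow, eval_finset_sum, eval_mul, eval_C, eval_sub, eval_X,
      eval_one, zero_sub]
    rw [← Finset.add_sum_erase _ _ (show (1 : ℕ) ∈ Finset.Icc 1 n by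
      simp only [Finset.mem_Icc]; omega)]
    have hIoc : Finset.Ioc 1 n = Finset.Icc 2 n := by
      ext x; simp only [Finset.mem_Ioc, Finset.mem_Icc]; omega
    rw [Finset.Icc_erase_left, hIoc, hsumS, hb1, pow_one]
    linear_combination 9 * c * hsq - hc
  -- the binomial expansion of X^n in the (X-1)-basis
  have hXpow : ∑ k ∈ Finset.range (n + 1), C ((n.choose k : ℤ)) * (X - 1) ^ (n - k) =
      (X : ℤ[X]) ^ n := by
    have h := add_pow (X - 1 : ℤ[X]) 1 n
    simp only [sub_add_cancel, one_pow, mul_one] at h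
    rw [h, ← Finset.sum_range_reflect]
    refine Finset.sum_congr rfl fun j hj => ?_
    simp only [Finset.mem_range] at hj
    rw [show n + 1 - 1 - j = n - j from by omega, Nat.choose_symm (by omega), mul_comm,
      map_natCast (C : ℤ →+* ℤ[X]), Nat.sub_sub_self (show j ≤ n by omega)]
  have hrange : Finset.range (n + 1) = insert 0 (Finset.Icc 1 n) := by
    ext k
    simp only [Finset.mem_range, Finset.mem_insert, Finset.mem_Icc]
    omega
  have hfsub : f - X ^ n =
      ∑ k ∈ Finset.Icc 1 n, C (9 ^ k * b k - (n.choose k : ℤ)) * (X - 1) ^ (n - k) := by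
    rw [hfdef, ← hXpow, hrange, Finset.sum_insert (by simp)]
    simp only [Nat.choose_zero_right, Nat.cast_one, map_one, one_mul, Nat.sub_zero,
      map_sub, sub_mul]
    rw [Finset.sum_sub_distrib]
    ring
  have hcoeff : ∀ j, (p : ℤ) ∣ (f - X ^ n).coeff j := by
    intro j
    rw [hfsub, finset_sum_coeff]
    refine Finset.dvd_sum fun k hk => ?_
    rw [coeff_C_mul]
    exact (hdvd k hk).mul_right _
  refine ⟨b, f, hfdef, hfm, hnd, heval, ?_⟩
  constructor
  · rw [hfm.leadingCoeff]
    intro hmem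
    rw [Ideal.mem_span_singleton] at hmem
    have := Int.le_of_dvd one_pos hmem
    linarith
  · intro i hi
    rw [hnd] at hi
    rw [Ideal.mem_span_singleton]
    have h := hcoeff i
    rw [coeff_sub, coeff_X_pow, if_neg (Nat.ne_of_lt hi), sub_zero] at h
    exact h
  · rw [coeff_zero_eq_eval_zero, heval, Ideal.span_singleton_pow, Ideal.mem_span_singleton]
    intro hdv
    have := Int.le_of_dvd (by linarith) hdv
    nlinarith
end
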